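/- Let A be a unital C*-algebra, G a finite group, and α an action of G on A. Then tsr(A ⋊_α G) ≤ |G| · tsr(A), where |G| is the order of G. -/

import Mathlib

/-- `Lg R n` is the set of n-tuples generating `R` as a left ideal. -/
def Lg (R : Type*) [Ring R] (n : ℕ) : Set (Fin n → R) :=
  {b | ∃ c : Fin n → R, ∑ i, c i * b i = 1}

/-- Topological stable rank. -/
noncomputable def tsr (R : Type*) [Ring R] [TopologicalSpace R] : ℕ∞ :=
  sInf {N : ℕ∞ | ∃ n : ℕ, (n : ℕ∞) = N ∧ Dense (Lg R n)}


/-- `B`, together with an embedding `ι : A → B` and unitaries `u g` implementing the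
action `α` of the finite group `G`, is (a copy of) the crossed product `A ⋊_α G`:
`α` is an action by *-automorphisms, the `u g` are unitaries with `u g u h = u (gh)`,
`u 1 = 1`, implementing `α`, and every element of `B` is uniquely of the form
`∑ g, ι (a g) * u g`. -/
def IsCrossedProduct {A B G : Type*} [CStarAlgebra A] [CStarAlgebra B] [Group G] [Fintype G]
    (α : G → (A ≃⋆ₐ[ℂ] A)) (ι : A →⋆ₐ[ℂ] B) (u : G → B) : Prop :=
  (∀ a : A, α 1 a = a) ∧ (∀ g h (a : A), α (g * h) a = α g (α h a)) ∧
  Function.Injective ι ∧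
  (∀ g, star (u g) * u g = 1 ∧ u g * star (u g) = 1) ∧
  (∀ g h, u g * u h = u (g * h)) ∧ u 1 = 1 ∧
  (∀ g a, u g * ι a * star (u g) = ι (α g a)) ∧
  (∀ b : B, ∃ a : G → A, b = ∑ g, ι (a g) * u g) ∧
  (∀ a : G → A, (∑ g, ι (a g) * u g) = 0 → ∀ g, a g = 0)

section Aux

variable {A : Type*} [CStarAlgebra A]

/-- The rows of `S` generate `A^k` as a left `A`-module. -/
def LIrows {m k : ℕ} (S : Fin k × Fin m → Fin k → A) : Prop :=
  ∀ j : Fin k, Pi.single j (1 : A) ∈ Submodule.span A (Set.range S)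

/-- Prepending a zero, as an `A`-linear map. -/
def consLM (A : Type*) [CStarAlgebra A] (k : ℕ) : (Fin k → A) →ₗ[A] (Fin (k + 1) → A) where
  toFun v := Fin.cons 0 v
  map_add' v w := by
    funext j
    refine Fin.cases ?_ (fun i => ?_) j <;> simp
  map_smul' a v := by
    funext j
    refine Fin.cases ?_ (fun i => ?_) j <;> simp

lemma cons_single {k : ℕ} (j : Fin k) :
    (Fin.cons 0 (Pi.single j (1 : A)) : Fin (k + 1) → A) = Pi.single j.succ 1 := by
  funext i
  refine Fin.cases ?_ (fun i' => ?_) i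
  · simp [Pi.single_apply, (Fin.succ_ne_zero j).symm]
  · simp [Pi.single_apply, Fin.succ_inj]

/-- Key density lemma: if `Lg A m` is dense, then the set of `(km) × k` matrices over `A`
whose rows generate `A^k` as a left module is dense. Elementary induction on `k`:
the first block of `m` rows is perturbed to make its first column a left-generating
`m`-tuple; after a row reduction the remaining `(k-1)m` rows and `k-1` columns are
handled by the inductive hypothesis. -/
lemma dense_LIrows (m : ℕ) (hm : Dense (Lg A m)) (k : ℕ) :
    Dense {S : Fin k × Fin m → Fin k → A | LIrows S} := by
  induction k with
  | zero =>
    have h : {S : Fin 0 × Fin m → Fin 0 → A | LIrows S} = Set.univ :=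
      Set.eq_univ_of_forall fun S => fun j => j.elim0
    rw [h]; exact dense_univ
  | succ k IH =>
    rw [Metric.dense_iff]
    intro S ε hε
    obtain ⟨x', hx'b, d, hd⟩ := Metric.dense_iff.mp hm (fun t => S (0, t) 0) ε hε
    set w : Fin k → A := fun j => ∑ t, d t * S (0, t) j.succ with hw
    set Z : Fin k × Fin m → Fin k → A :=
      fun r j => S (r.1.succ, r.2) j.succ - S (r.1.succ, r.2) 0 * w j with hZ
    obtain ⟨Z', hZ'b, hZ'⟩ := Metric.dense_iff.mp IH Z ε hε
    set S' : Fin (k + 1) × Fin m → Fin (k + 1) → A := fun r =>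
      Fin.cons (Fin.cases (x' r.2) (fun _ => S r 0) r.1)
        (Fin.cases (fun j' => S r j'.succ) (fun i j' => Z' (i, r.2) j' + S r 0 * w j') r.1)
      with hS'
    refine ⟨S', Metric.mem_ball.mpr ?_, ?_⟩
    · rw [dist_pi_lt_iff hε]
      rintro ⟨p, t⟩
      rw [dist_pi_lt_iff hε]
      intro j
      refine Fin.cases ?_ (fun i => ?_) p
      · refine Fin.cases ?_ (fun j' => ?_) j
        · have h1 : S' (0, t) 0 = x' t := by simp [hS']
          rw [h1]
          exact lt_of_le_of_lt (dist_le_pi_dist x' (fun t => S (0, t) 0) t)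
            (Metric.mem_ball.mp hx'b)
        · have h1 : S' (0, t) j'.succ = S (0, t) j'.succ := by simp [hS']
          rw [h1]; simpa using hε
      · refine Fin.cases ?_ (fun j' => ?_) j
        · have h1 : S' (i.succ, t) 0 = S (i.succ, t) 0 := by simp [hS']
          rw [h1]; simpa using hε
        · have h1 : S' (i.succ, t) j'.succ = Z' (i, t) j' + S (i.succ, t) 0 * w j' := by
            simp [hS']
          have h2 : S (i.succ, t) j'.succ = Z (i, t) j' + S (i.succ, t) 0 * w j' := by
            simp [hZ]
          rw [h1, h2, dist_add_right]
          calc dist (Z' (i, t) j') (Z (i, t) j') ≤ dist (Z' (i, t)) (Z (i, t)) :=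
                dist_le_pi_dist _ _ _
            _ ≤ dist Z' Z := dist_le_pi_dist _ _ _
            _ < ε := Metric.mem_ball.mp hZ'b
    · -- LIrows S'
      have hr0 : (Fin.cons 1 w : Fin (k + 1) → A) ∈ Submodule.span A (Set.range S') := by
        have h : (Fin.cons 1 w : Fin (k + 1) → A) = ∑ t, d t • S' (0, t) := by
          funext j
          refine Fin.cases ?_ (fun j' => ?_) j
          · simpa [hS', Finset.sum_apply] using hd.symm
          · simp [hS', Finset.sum_apply, hw]
        rw [h]
        exact Submodule.sum_mem _ fun t _ =>
          Submodule.smul_mem _ _ (Submodule.subset_span (Set.mem_range_self _))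
      have hz : ∀ (i : Fin k) (t : Fin m),
          (Fin.cons 0 (Z' (i, t)) : Fin (k + 1) → A) ∈ Submodule.span A (Set.range S') := by
        intro i t
        have h : (Fin.cons 0 (Z' (i, t)) : Fin (k + 1) → A)
            = S' (i.succ, t) - S (i.succ, t) 0 • (Fin.cons 1 w : Fin (k + 1) → A) := by
          funext j
          refine Fin.cases ?_ (fun j' => ?_) j
          · simp [hS']
          · simp [hS']
        rw [h]
        exact Submodule.sub_mem _ (Submodule.subset_span (Set.mem_range_self _))
          (Submodule.smul_mem _ _ hr0)
      have hsucc : ∀ j' : Fin k,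
          Pi.single (Fin.succ j') (1 : A) ∈ Submodule.span A (Set.range S') := by
        intro j'
        have h1 : (Fin.cons 0 (Pi.single j' (1 : A)) : Fin (k + 1) → A)
            ∈ Submodule.map (consLM A k) (Submodule.span A (Set.range Z')) :=
          ⟨Pi.single j' 1, hZ' j', rfl⟩
        have h2 : Submodule.map (consLM A k) (Submodule.span A (Set.range Z'))
            ≤ Submodule.span A (Set.range S') := by
          rw [Submodule.map_span]
          refine Submodule.span_le.mpr ?_
          rintro _ ⟨_, ⟨⟨i, t⟩, rfl⟩, rfl⟩
          exact hz i t
        rw [← cons_single]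
        exact h2 h1
      have h0 : Pi.single (0 : Fin (k + 1)) (1 : A) ∈ Submodule.span A (Set.range S') := by
        have h : Pi.single (0 : Fin (k + 1)) (1 : A)
            = (Fin.cons 1 w : Fin (k + 1) → A)
              - ∑ j', w j' • (Fin.cons 0 (Pi.single j' (1 : A)) : Fin (k + 1) → A) := by
          funext j
          refine Fin.cases ?_ (fun i => ?_) j
          · simp
          · simp [Pi.single_apply, Fin.succ_ne_zero i, Finset.sum_apply, mul_ite]
        rw [h]
        refine Submodule.sub_mem _ hr0 (Submodule.sum_mem _ fun j' _ =>
          Submodule.smul_mem _ _ ?_)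
        rw [cons_single]
        exact hsucc j'
      intro j
      refine Fin.cases ?_ (fun j' => ?_) j
      · exact h0
      · exact hsucc j'

end Aux

/-- For a unital C*-algebra `A`, a finite group `G` and an action `α` of
`G` on `A`, the crossed product satisfies `tsr (A ⋊_α G) ≤ |G| · tsr A`. -/
theorem stmt_5 {A B G : Type*} [CStarAlgebra A] [CStarAlgebra B] [Group G] [Fintype G]
    (α : G → (A ≃⋆ₐ[ℂ] A)) (ι : A →⋆ₐ[ℂ] B) (u : G → B)
    (hB : IsCrossedProduct α ι u) :
    tsr B ≤ (Fintype.card G : ℕ∞) * tsr A := by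
  classical
  obtain ⟨hα1, hαmul, hιinj, hu, humul, hu1, hcov, hgen, huniq⟩ := hB
  by_cases hA : ∃ n : ℕ, Dense (Lg A n)
  · obtain ⟨m, hm, hmin⟩ : ∃ m : ℕ, Dense (Lg A m) ∧ ∀ n, Dense (Lg A n) → m ≤ n :=
      ⟨Nat.find hA, Nat.find_spec hA, fun n hn => Nat.find_min' hA hn⟩
    have hA_ge : (m : ℕ∞) ≤ tsr A := by
      refine le_sInf ?_
      rintro N ⟨n, rfl, hn⟩
      exact_mod_cast hmin n hn
    set k := Fintype.card G with hk
    have hι : Continuous ι :=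
      AddMonoidHomClass.continuous_of_bound ι 1
        (fun a => by simpa using NonUnitalStarAlgHom.norm_apply_le ι a)
    choose coeff hcoeff using hgen
    set σ : G ≃ Fin k := Fintype.equivFin G with hσ
    let ιL : A →L[ℂ] B := { toLinearMap := ι.toAlgHom.toLinearMap, cont := hι }
    let Ψ : ((Fin k × Fin m) → Fin k → A) →L[ℂ] ((Fin k × Fin m) → B) :=
      ContinuousLinearMap.pi fun r => ∑ g : G,
        (((ContinuousLinearMap.mul ℂ B).flip (u g)).comp
          (ιL.comp ((ContinuousLinearMap.proj (σ g)).comp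
            (ContinuousLinearMap.proj (R := ℂ) (φ := fun _ : Fin k × Fin m => Fin k → A) r))))
    have hΨ : ∀ S r, Ψ S r = ∑ g : G, ι (S r (σ g)) * u g := by
      intro S r
      simp [Ψ, ιL, ContinuousLinearMap.pi_apply, ContinuousLinearMap.sum_apply,
        ContinuousLinearMap.comp_apply, ContinuousLinearMap.proj_apply,
        ContinuousLinearMap.flip_apply, ContinuousLinearMap.mul_apply']
      rfl
    have hinj : Function.Injective Ψ := by
      intro S₁ S₂ h
      funext r j
      have h0 : (∑ g : G, ι (S₁ r (σ g) - S₂ r (σ g)) * u g) = 0 := by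
        have hr := congrFun h r
        rw [hΨ, hΨ] at hr
        simp only [map_sub, sub_mul, Finset.sum_sub_distrib, hr, sub_self]
      have h1 := huniq _ h0 (σ.symm j)
      simpa [sub_eq_zero, Equiv.apply_symm_apply] using h1
    have hsurj : Function.Surjective Ψ := by
      intro b
      refine ⟨fun r j => coeff (b r) (σ.symm j), ?_⟩
      funext r
      rw [hΨ]
      simp only [Equiv.symm_apply_apply]
      exact (hcoeff (b r)).symm
    let ΨE := ContinuousLinearEquiv.ofBijective Ψ
      (LinearMap.ker_eq_bot.mpr hinj) (LinearMap.range_eq_top.mpr hsurj)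
    have hΨE : ⇑ΨE.toHomeomorph = ⇑Ψ := by
      funext S
      rfl
    have hdense1 : Dense (⇑Ψ '' {S : (Fin k × Fin m) → Fin k → A | LIrows S}) := by
      rw [← hΨE]
      exact (ΨE.toHomeomorph.isDenseEmbedding.dense_image).mpr (dense_LIrows m hm k)
    have himg : (⇑Ψ '' {S : (Fin k × Fin m) → Fin k → A | LIrows S})
        ⊆ {b : (Fin k × Fin m) → B | ∃ c : (Fin k × Fin m) → B, ∑ r, c r * b r = 1} := by
      rintro _ ⟨S, hS, rfl⟩
      obtain ⟨cfs, hcfs⟩ := (Submodule.mem_span_range_iff_exists_fun A).mp (hS (σ 1))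
      refine ⟨fun r => ι (cfs r), ?_⟩
      have hterm : ∀ r, ι (cfs r) * (Ψ S r) = ∑ g : G, ι (cfs r * S r (σ g)) * u g := by
        intro r
        rw [hΨ, Finset.mul_sum]
        exact Finset.sum_congr rfl fun g _ => by rw [map_mul, mul_assoc]
      calc ∑ r, ι (cfs r) * (Ψ S r)
          = ∑ r, ∑ g : G, ι (cfs r * S r (σ g)) * u g :=
            Finset.sum_congr rfl fun r _ => hterm r
        _ = ∑ g : G, ∑ r, ι (cfs r * S r (σ g)) * u g := Finset.sum_comm
        _ = ∑ g : G, ι ((Pi.single (σ 1) (1 : A) : Fin k → A) (σ g)) * u g := by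
            refine Finset.sum_congr rfl fun g _ => ?_
            rw [← Finset.sum_mul, ← map_sum]
            congr 2
            have hce := congrFun hcfs (σ g)
            simpa [Finset.sum_apply, smul_eq_mul] using hce
        _ = 1 := by
            have hterm2 : ∀ g : G,
                ι ((Pi.single (σ 1) (1 : A) : Fin k → A) (σ g)) * u g = if g = 1 then u g else 0 := by
              intro g
              rw [Pi.single_apply]
              by_cases hg : g = 1
              · simp [hg]
              · simp [hg, EmbeddingLike.apply_eq_iff_eq]
            rw [Finset.sum_congr rfl fun g _ => hterm2 g]
            simp [hu1]
    have hdense2 : Dense {b : (Fin k × Fin m) → B |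
        ∃ c : (Fin k × Fin m) → B, ∑ r, c r * b r = 1} := hdense1.mono himg
    set e : Fin k × Fin m ≃ Fin (k * m) := finProdFinEquiv with he
    let Φ : ((Fin k × Fin m) → B) ≃ₜ (Fin (k * m) → B) :=
      { toFun := fun b => b ∘ e.symm
        invFun := fun y => y ∘ e
        left_inv := fun b => by funext r; simp
        right_inv := fun y => by funext i; simp
        continuous_toFun := continuous_pi fun i => continuous_apply _
        continuous_invFun := continuous_pi fun r => continuous_apply _ }
    have hdense3 : Dense (⇑Φ '' {b : (Fin k × Fin m) → B |
        ∃ c : (Fin k × Fin m) → B, ∑ r, c r * b r = 1}) :=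
      (Φ.isDenseEmbedding.dense_image).mpr hdense2
    have himg2 : (⇑Φ '' {b : (Fin k × Fin m) → B |
        ∃ c : (Fin k × Fin m) → B, ∑ r, c r * b r = 1}) ⊆ Lg B (k * m) := by
      rintro _ ⟨b, ⟨c, hc⟩, rfl⟩
      refine ⟨fun i => c (e.symm i), ?_⟩
      show ∑ i, c (e.symm i) * b (e.symm i) = 1
      rw [← hc]
      exact Equiv.sum_comp e.symm (fun r => c r * b r)
    have hdense4 : Dense (Lg B (k * m)) := hdense3.mono himg2
    have hB_le : tsr B ≤ ((k * m : ℕ) : ℕ∞) := sInf_le ⟨k * m, rfl, hdense4⟩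
    calc tsr B ≤ ((k * m : ℕ) : ℕ∞) := hB_le
      _ = (k : ℕ∞) * (m : ℕ∞) := by push_cast; rfl
      _ ≤ (k : ℕ∞) * tsr A := mul_le_mul_right hA_ge _
  · have htop : tsr A = ⊤ := by
      have hempty : {N : ℕ∞ | ∃ n : ℕ, (n : ℕ∞) = N ∧ Dense (Lg A n)} = ∅ := by
        ext N
        simp only [Set.mem_setOf_eq, Set.mem_empty_iff_false, iff_false]
        rintro ⟨n, rfl, hn⟩
        exact hA ⟨n, hn⟩
      rw [tsr, hempty, sInf_empty]
    rw [htop]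
    have h1 : (1 : ℕ∞) ≤ (Fintype.card G : ℕ∞) := by
      exact_mod_cast Nat.one_le_iff_ne_zero.mpr Fintype.card_ne_zero
    calc tsr B ≤ ⊤ := le_top
      _ = 1 * ⊤ := (one_mul _).symm
      _ ≤ (Fintype.card G : ℕ∞) * ⊤ := mul_le_mul_left h1 ⊤
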